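/- Let F be a real symplectic matrix with det(I+F) ≠ 0, and let T_F = ((I+iJ)F^{-1} + I − iJ)^{-1}. Then T_F T_F* = (2(F^{-T}F^{-1} + I))^{-1}. -/

import Mathlib

open Matrix Complex

section Aux

variable {m : Type*} [Fintype m] [DecidableEq m]

lemma mapRC_mul (A B : Matrix m m ℝ) :
    (A * B).map Complex.ofReal = A.map Complex.ofReal * B.map Complex.ofReal := by
  ext i j
  simp [Matrix.mul_apply, Matrix.map_apply]

lemma mapRC_one : ((1 : Matrix m m ℝ)).map Complex.ofReal = 1 := by
  ext i j
  simp [Matrix.one_apply, Matrix.map_apply, apply_ite Complex.ofReal]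

lemma mapRC_inv (A : Matrix m m ℝ) (hA : IsUnit A.det) :
    (A.map Complex.ofReal)⁻¹ = A⁻¹.map Complex.ofReal := by
  apply Matrix.inv_eq_right_inv
  rw [← mapRC_mul, Matrix.mul_nonsing_inv _ hA, mapRC_one]

lemma mapRC_conjTranspose (A : Matrix m m ℝ) :
    (A.map Complex.ofReal)ᴴ = Aᵀ.map Complex.ofReal := by
  ext i j
  simp [Matrix.conjTranspose_apply, Matrix.map_apply]

lemma mapRC_transpose (A : Matrix m m ℝ) :
    (A.map Complex.ofReal)ᵀ = Aᵀ.map Complex.ofReal := by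
  ext i j
  simp [Matrix.map_apply]

end Aux

theorem stmt_16 (n : ℕ) (F : Matrix (Fin n ⊕ Fin n) (Fin n ⊕ Fin n) ℝ)
    (hF : Fᵀ * (Matrix.fromBlocks 0 1 (-1) 0) * F = (Matrix.fromBlocks 0 1 (-1) 0 :
      Matrix (Fin n ⊕ Fin n) (Fin n ⊕ Fin n) ℝ))
    (hdet : (1 + F).det ≠ 0)
    (T : Matrix (Fin n ⊕ Fin n) (Fin n ⊕ Fin n) ℂ)
    (hT : T = ((1 + Complex.I • (Matrix.fromBlocks 0 1 (-1) 0 :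
        Matrix (Fin n ⊕ Fin n) (Fin n ⊕ Fin n) ℂ)) * (F.map Complex.ofReal)⁻¹ +
      1 - Complex.I • (Matrix.fromBlocks 0 1 (-1) 0 :
        Matrix (Fin n ⊕ Fin n) (Fin n ⊕ Fin n) ℂ))⁻¹) :
    T * Tᴴ = (((2 : ℝ) • ((F⁻¹)ᵀ * F⁻¹ + 1))⁻¹).map Complex.ofReal := by
  set J : Matrix (Fin n ⊕ Fin n) (Fin n ⊕ Fin n) ℝ := Matrix.fromBlocks 0 1 (-1) 0 with hJdef
  -- J * J = -1
  have hJ2 : J * J = -1 := by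
    rw [hJdef, Matrix.fromBlocks_multiply]
    simp [← Matrix.fromBlocks_one, Matrix.fromBlocks_neg]
  have hJunit : IsUnit J.det := by
    apply Matrix.isUnit_det_of_right_inverse (B := -J)
    rw [Matrix.mul_neg, hJ2, neg_neg]
  -- F invertible
  have hFdet : IsUnit F.det := by
    have h := congrArg Matrix.det hF
    rw [Matrix.det_mul, Matrix.det_mul, Matrix.det_transpose] at h
    rw [isUnit_iff_ne_zero]
    intro h0
    rw [h0] at h
    simp at h
    exact (isUnit_iff_ne_zero.mp hJunit) h.symm
  set G : Matrix (Fin n ⊕ Fin n) (Fin n ⊕ Fin n) ℝ := F⁻¹ with hGdef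
  have hFG : F * G = 1 := Matrix.mul_nonsing_inv _ hFdet
  have hGF : G * F = 1 := Matrix.nonsing_inv_mul _ hFdet
  -- symplectic relation for the inverse
  have hsympR : Gᵀ * J * G = J := by
    have h2 : Gᵀ * Fᵀ = 1 := by rw [← Matrix.transpose_mul, hFG, Matrix.transpose_one]
    calc Gᵀ * J * G = Gᵀ * (Fᵀ * J * F) * G := by rw [hF]
      _ = Gᵀ * (Fᵀ * (J * (F * G))) := by simp only [Matrix.mul_assoc]
      _ = (Gᵀ * Fᵀ) * (J * (F * G)) := by simp only [Matrix.mul_assoc]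
      _ = J := by rw [h2, hFG, one_mul, Matrix.mul_one]
  -- complex versions
  set Jc : Matrix (Fin n ⊕ Fin n) (Fin n ⊕ Fin n) ℂ := J.map Complex.ofReal with hJcdef
  have hJcEq : (Matrix.fromBlocks 0 1 (-1) 0 :
      Matrix (Fin n ⊕ Fin n) (Fin n ⊕ Fin n) ℂ) = Jc := by
    ext i j
    cases i <;> cases j <;>
      simp [hJcdef, hJdef, Matrix.map_apply, Matrix.fromBlocks, Matrix.one_apply,
        apply_ite Complex.ofReal]
  set Gc : Matrix (Fin n ⊕ Fin n) (Fin n ⊕ Fin n) ℂ := G.map Complex.ofReal with hGcdef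
  set Gt : Matrix (Fin n ⊕ Fin n) (Fin n ⊕ Fin n) ℂ := Gᵀ.map Complex.ofReal with hGtdef
  have hJc2 : Jc * Jc = -1 := by
    rw [hJcdef, ← mapRC_mul, hJ2]
    ext i j
    simp [Matrix.map_apply, Matrix.one_apply, apply_ite Complex.ofReal]
  have hsympC : Gt * Jc * Gc = Jc := by
    rw [hGtdef, hJcdef, hGcdef, ← mapRC_mul, ← mapRC_mul, hsympR]
  -- the matrix S = I • Jc
  set S : Matrix (Fin n ⊕ Fin n) (Fin n ⊕ Fin n) ℂ := Complex.I • Jc with hSdef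
  have hS2 : S * S = 1 := by
    rw [hSdef, smul_mul_smul_comm, hJc2, Complex.I_mul_I]
    simp
  have hS2' : ∀ X : Matrix (Fin n ⊕ Fin n) (Fin n ⊕ Fin n) ℂ, S * (S * X) = X := by
    intro X; rw [← Matrix.mul_assoc, hS2, Matrix.one_mul]
  have hGSG : Gt * (S * Gc) = S := by
    rw [hSdef, smul_mul_assoc, mul_smul_comm, ← Matrix.mul_assoc, hsympC]
  have hJT : Jᵀ = -J := by
    ext i j
    cases i <;> cases j <;>
      simp [hJdef, Matrix.fromBlocks, Matrix.one_apply, eq_comm]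
  have hSH : Sᴴ = S := by
    rw [hSdef, Matrix.conjTranspose_smul, hJcdef, mapRC_conjTranspose, hJT,
      Complex.star_def, Complex.conj_I]
    ext i j
    simp [Matrix.map_apply]
  have hGcH : Gcᴴ = Gt := by rw [hGcdef, mapRC_conjTranspose, hGtdef]
  -- A and its conjugate transpose
  set A : Matrix (Fin n ⊕ Fin n) (Fin n ⊕ Fin n) ℂ := (1 + S) * Gc + 1 - S with hAdef
  have hAH : Aᴴ = Gt * (1 + S) + 1 - S := by
    rw [hAdef]
    rw [Matrix.conjTranspose_sub, Matrix.conjTranspose_add, Matrix.conjTranspose_mul,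
      Matrix.conjTranspose_add, Matrix.conjTranspose_one, hSH, hGcH]
  -- the key identity
  set W : Matrix (Fin n ⊕ Fin n) (Fin n ⊕ Fin n) ℂ := Gt * Gc + 1 with hWdef
  have key : Aᴴ * A = W + W := by
    rw [hAH, hAdef, hWdef]
    simp only [Matrix.add_mul, Matrix.mul_add, Matrix.sub_mul, Matrix.mul_sub,
      Matrix.mul_one, Matrix.one_mul, Matrix.mul_assoc, hS2', hGSG, hS2]
    abel
  -- the real target matrix
  set Mr : Matrix (Fin n ⊕ Fin n) (Fin n ⊕ Fin n) ℝ := (2 : ℝ) • (Gᵀ * G + 1) with hMrdef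
  have hMrW : Mr.map Complex.ofReal = W + W := by
    rw [hMrdef, two_smul]
    have : ((Gᵀ * G + 1) + (Gᵀ * G + 1)).map Complex.ofReal
        = (Gᵀ * G + 1).map Complex.ofReal + (Gᵀ * G + 1).map Complex.ofReal := by
      ext i j; simp [Matrix.map_apply]
    rw [this]
    have h1 : (Gᵀ * G + 1).map Complex.ofReal = W := by
      rw [hWdef, hGtdef, hGcdef]
      have : (Gᵀ * G + 1).map Complex.ofReal
          = (Gᵀ * G).map Complex.ofReal + (1 : Matrix _ _ ℝ).map Complex.ofReal := by
        ext i j; simp [Matrix.map_apply, Matrix.one_apply, apply_ite Complex.ofReal]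
      rw [this, mapRC_mul, mapRC_one]
    rw [h1]
  -- Mr is invertible (positive definite)
  have hMrPD : Mr.PosDef := by
    rw [hMrdef, two_smul]
    have h1 : (Gᵀ * G + 1 : Matrix (Fin n ⊕ Fin n) (Fin n ⊕ Fin n) ℝ).PosDef := by
      have hsd : (Gᵀ * G : Matrix (Fin n ⊕ Fin n) (Fin n ⊕ Fin n) ℝ).PosSemidef := by
        have := Matrix.posSemidef_conjTranspose_mul_self (G : Matrix _ _ ℝ)
        simpa [Matrix.conjTranspose_eq_transpose_of_trivial] using this
      exact Matrix.PosDef.posSemidef_add hsd Matrix.PosDef.one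
    exact Matrix.PosDef.add_posSemidef h1 h1.posSemidef
  have hMrUnit : IsUnit Mr.det := isUnit_iff_ne_zero.mpr (ne_of_gt hMrPD.det_pos)
  -- A has invertible determinant
  have hdetWW : (W + W).det ≠ 0 := by
    rw [← hMrW]
    have : (Mr.map Complex.ofReal).det = (Complex.ofRealHom) Mr.det := by
      have := RingHom.map_det (Complex.ofRealHom) Mr
      exact this.symm
    rw [this]
    simp only [ofRealHom_eq_coe, ne_eq, Complex.ofReal_eq_zero]
    exact isUnit_iff_ne_zero.mp hMrUnit
  have hAunit : IsUnit A.det := by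
    rw [isUnit_iff_ne_zero]
    intro h0
    apply hdetWW
    rw [← key, Matrix.det_mul, h0, mul_zero]
  have hAHunit : IsUnit Aᴴ.det := by
    rw [isUnit_iff_ne_zero]
    intro h0
    apply hdetWW
    rw [← key, Matrix.det_mul, h0, zero_mul]
  -- identify T with A⁻¹
  have hTA : T = A⁻¹ := by
    rw [hT, hAdef, hJcEq, hGcdef, hGdef, mapRC_inv F hFdet, ← hSdef, ← hGdef, ← hGcdef]
  -- finish
  rw [hTA, Matrix.conjTranspose_nonsing_inv, ← Matrix.mul_inv_rev, key, ← hMrW,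
    mapRC_inv Mr hMrUnit, hMrdef]
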